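/- The graph K_4 minus an edge is not 5-anti-common: there exist 5-edge-colorings of K_n (for n → ∞) with at least n^4/62 + O(n^3) rainbow copies of K_4∖e, and n^4/62 > 6n^4/625 = (C(n,4)·4!·C(5,5)·5!)/(4·5^5) + O(n^3), exceeding the random-coloring count. -/

import Mathlib

open Filter Topology

/-- A copy of `H` (given by an injection `f`) in `K_n` is rainbow under the
edge-coloring `c` if all edges of the copy receive distinct colors. -/
def IsRainbow {m n r : ℕ} (H : SimpleGraph (Fin m)) (c : Sym2 (Fin n) → Fin r)
    (f : Fin m ↪ Fin n) : Prop :=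
  ∀ e₁ ∈ H.edgeSet, ∀ e₂ ∈ H.edgeSet, e₁ ≠ e₂ → c (e₁.map ⇑f) ≠ c (e₂.map ⇑f)

/-- Number of (labeled) rainbow copies of `H` in `K_n` under the coloring `c`. -/
noncomputable def rainbowCount {m n r : ℕ} (H : SimpleGraph (Fin m))
    (c : Sym2 (Fin n) → Fin r) : ℕ :=
  Nat.card {f : Fin m ↪ Fin n // IsRainbow H c f}

/-- `rbL H n r`: the maximum number of labeled rainbow copies of `H` over all
`r`-edge-colorings of `K_n`.  (The labeled count is `|Aut H|` times the number
of rainbow copies `rb_r(H;n)` of the paper.) -/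
noncomputable def rbL {m : ℕ} (H : SimpleGraph (Fin m)) (n r : ℕ) : ℕ :=
  sSup (Set.range fun c : Sym2 (Fin n) → Fin r => rainbowCount H c)

/-- The number of automorphisms of `H`. -/
noncomputable def autCard {m : ℕ} (H : SimpleGraph (Fin m)) : ℕ :=
  Nat.card (H ≃g H)

/-- `rbC H n r`: the maximum proportion of copies of `H` in `K_n` which are rainbow,
i.e. `rb_r(H;n) / (C(n,m)·m!/|Aut(H)|) = rbL H n r / (C(n,m)·m!)`. -/
noncomputable def rbC {m : ℕ} (H : SimpleGraph (Fin m)) (n r : ℕ) : ℝ :=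
  (rbL H n r : ℝ) / ((n.choose m) * (m.factorial))

/-- `K_4` minus an edge, as a graph on `Fin 4`. -/
def K4e : SimpleGraph (Fin 4) := (SimpleGraph.completeGraph (Fin 4)).deleteEdges {s(2, 3)}

/-! ### Auxiliary constructions -/


instance K4e.decAdj : DecidableRel K4e.Adj := fun a b =>
  decidable_of_iff (a ≠ b ∧ s(a,b) ∉ ({s(2,3)} : Set (Sym2 (Fin 4)))) (by
    simp [K4e, SimpleGraph.completeGraph])

lemma K4e_edge (e : Sym2 (Fin 4)) : e ∈ K4e.edgeSet ↔
    e = s(0,1) ∨ e = s(0,2) ∨ e = s(0,3) ∨ e = s(1,2) ∨ e = s(1,3) := by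
  induction e using Sym2.ind with
  | _ a b => rw [SimpleGraph.mem_edgeSet]; revert a b; decide

lemma isRainbow_iff {n r : ℕ} (c : Sym2 (Fin n) → Fin r) (f : Fin 4 ↪ Fin n) :
    IsRainbow K4e c f ↔ List.Pairwise (· ≠ ·)
      [c s(f 0, f 1), c s(f 0, f 2), c s(f 0, f 3), c s(f 1, f 2), c s(f 1, f 3)] := by
  constructor
  · intro H
    have key : ∀ a b a' b' : Fin 4, s(a,b) ∈ K4e.edgeSet → s(a',b') ∈ K4e.edgeSet →
        s(a,b) ≠ s(a',b') → c s(f a, f b) ≠ c s(f a', f b') := by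
      intro a b a' b' h1 h2 h
      have := H _ h1 _ h2 h
      simpa [Sym2.map_pair_eq] using this
    simp only [List.pairwise_cons, List.mem_cons, List.not_mem_nil, or_false,
      forall_eq_or_imp, forall_eq, List.Pairwise.nil, false_implies, forall_const, and_true]
    refine ⟨⟨?_,?_,?_,?_⟩,⟨?_,?_,?_⟩,⟨?_,?_⟩,?_,fun _ => trivial⟩ <;>
      (refine key _ _ _ _ ?_ ?_ ?_ <;> decide)
  · intro h e₁ h₁ e₂ h₂ hne
    simp only [List.pairwise_cons, List.mem_cons, List.not_mem_nil, or_false,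
      forall_eq_or_imp, forall_eq, List.Pairwise.nil, false_implies, forall_const,
      and_true] at h
    obtain ⟨⟨a1,a2,a3,a4⟩,⟨b1,b2,b3⟩,⟨c1,c2⟩,d1,-⟩ := h
    rw [K4e_edge] at h₁ h₂
    rcases h₁ with rfl|rfl|rfl|rfl|rfl <;> rcases h₂ with rfl|rfl|rfl|rfl|rfl <;>
      simp only [Sym2.map_pair_eq] <;>
      first
        | exact absurd rfl hne
        | exact a1 | exact a1.symm | exact a2 | exact a2.symm
        | exact a3 | exact a3.symm | exact a4 | exact a4.symm
        | exact b1 | exact b1.symm | exact b2 | exact b2.symm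
        | exact b3 | exact b3.symm | exact c1 | exact c1.symm
        | exact c2 | exact c2.symm | exact d1 | exact d1.symm

def colN : ℕ → ℕ → ℕ → Fin 5
  | 0, _, _ => 0
  | (k+1), x, y => if x % 5 = y % 5 then colN k (x/5) (y/5) else ⟨(x+y) % 5, by omega⟩

lemma colN_symm (k x y : ℕ) : colN k x y = colN k y x := by
  induction k generalizing x y with
  | zero => rfl
  | succ k ih =>
    simp only [colN]
    by_cases h : x % 5 = y % 5
    · rw [if_pos h, if_pos h.symm, ih]
    · rw [if_neg h, if_neg (Ne.symm h)]
      congr 1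
      omega

lemma colN_stable_aux : ∀ m x y, max x y = m → x ≠ y → ∀ f1 f2, max x y ≤ f1 → max x y ≤ f2 →
    colN f1 x y = colN f2 x y := by
  intro m
  induction m using Nat.strong_induction_on with
  | _ m ih =>
  intro x y hm hxy f1 f2 h1 h2
  have hmax : 1 ≤ max x y := by omega
  obtain ⟨f1', rfl⟩ : ∃ f, f1 = f + 1 := ⟨f1 - 1, by omega⟩
  obtain ⟨f2', rfl⟩ : ∃ f, f2 = f + 1 := ⟨f2 - 1, by omega⟩
  simp only [colN]
  by_cases h : x % 5 = y % 5
  · rw [if_pos h, if_pos h]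
    have h5 : 5 ≤ max x y := by omega
    have hne : x / 5 ≠ y / 5 := by omega
    have hlt : max (x/5) (y/5) < max x y := by omega
    exact ih _ (hm ▸ hlt) _ _ rfl hne _ _ (by omega) (by omega)
  · rw [if_neg h, if_neg h]

lemma colN_stable (x y : ℕ) (hxy : x ≠ y) {f1 f2 : ℕ} (h1 : max x y ≤ f1)
    (h2 : max x y ≤ f2) : colN f1 x y = colN f2 x y :=
  colN_stable_aux _ x y rfl hxy f1 f2 h1 h2

def cFin (n : ℕ) : Sym2 (Fin n) → Fin 5 :=
  Sym2.lift ⟨fun x y => colN n x y, fun x y => colN_symm n x y⟩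

lemma cFin_mk (n : ℕ) (x y : Fin n) : cFin n s(x, y) = colN n x y := rfl

lemma colA (n u v a b : ℕ) (hn : 1 ≤ n) (hu : u < 5) (hv : v < 5) (huv : u ≠ v) :
    colN n (5*a+u) (5*b+v) = colN 5 u v := by
  obtain ⟨m, rfl⟩ : ∃ m, n = m + 1 := ⟨n - 1, by omega⟩
  show colN (m+1) _ _ = colN (4+1) u v
  simp only [colN]
  rw [if_neg (by omega), if_neg (by omega)]
  exact Fin.ext (by simp; omega)

lemma colB (n q x y r : ℕ) (hq5 : 5*q ≤ n) (hr : r < 5) (hx : x < q) (hy : y < q)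
    (hxy : x ≠ y) : colN n (5*x+r) (5*y+r) = colN q x y := by
  obtain ⟨m, rfl⟩ : ∃ m, n = m + 1 := ⟨n - 1, by omega⟩
  show colN (m+1) _ _ = _
  simp only [colN]
  rw [if_pos (by omega)]
  have e1 : (5*x+r)/5 = x := by omega
  have e2 : (5*y+r)/5 = y := by omega
  rw [e1, e2]
  exact colN_stable x y hxy (by omega) (by omega)

def rb5p (g : Fin 4 → Fin 5) : Prop := List.Pairwise (· ≠ ·)
  [colN 5 (g 0) (g 1), colN 5 (g 0) (g 2), colN 5 (g 0) (g 3),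
   colN 5 (g 1) (g 2), colN 5 (g 1) (g 3)]

instance : DecidablePred rb5p := fun g => by unfold rb5p; infer_instance

lemma card40 : Nat.card {g : Fin 4 → Fin 5 // Function.Injective g ∧ rb5p g} = 40 := by
  rw [Nat.card_eq_fintype_card]; decide

noncomputable def RB (n : ℕ) : ℕ := rainbowCount K4e (cFin n)

lemma RB_step (n : ℕ) (hn : 5 ≤ n) : 40 * (n/5)^4 + 5 * RB (n/5) ≤ RB n := by
  set q := n / 5 with hqdef
  have hq1 : 1 ≤ q := by omega
  have hq5 : 5 * q ≤ n := by omega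
  -- the two source types
  let T1 := {g : Fin 4 → Fin 5 // Function.Injective g ∧ rb5p g} × (Fin 4 → Fin q)
  let T2 := Fin 5 × {f : Fin 4 ↪ Fin q // IsRainbow K4e (cFin q) f}
  -- map A
  have hAval : ∀ (g : Fin 4 → Fin 5) (a : Fin 4 → Fin q) (i : Fin 4),
      5 * (a i : ℕ) + (g i : ℕ) < n := by
    intro g a i
    have := (a i).2; have := (g i).2
    omega
  let FA : ∀ (g : {g : Fin 4 → Fin 5 // Function.Injective g ∧ rb5p g})
      (a : Fin 4 → Fin q), Fin 4 ↪ Fin n := fun g a =>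
    ⟨fun i => ⟨5 * (a i : ℕ) + (g.1 i : ℕ), hAval g.1 a i⟩, by
      intro i j h
      simp only [Fin.mk.injEq] at h
      have : (g.1 i : ℕ) = (g.1 j : ℕ) := by
        have := (g.1 i).2; have := (g.1 j).2; omega
      exact g.2.1 (Fin.ext this)⟩
  let FB : ∀ (r : Fin 5) (f : Fin 4 ↪ Fin q), Fin 4 ↪ Fin n := fun r f =>
    ⟨fun i => ⟨5 * (f i : ℕ) + (r : ℕ), by have := (f i).2; have := r.2; omega⟩, by
      intro i j h
      simp only [Fin.mk.injEq] at h
      exact f.injective (Fin.ext (by omega))⟩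
  have hFArb : ∀ g a, IsRainbow K4e (cFin n) (FA g a) := by
    intro g a
    rw [isRainbow_iff]
    obtain ⟨g, hginj, hgrb⟩ := g
    have key : ∀ i j : Fin 4, i ≠ j →
        cFin n s(FA ⟨g, hginj, hgrb⟩ a i, FA ⟨g, hginj, hgrb⟩ a j)
          = colN 5 (g i) (g j) := by
      intro i j hij
      rw [cFin_mk]
      exact colA n _ _ _ _ (by omega) (g i).2 (g j).2
        (fun h => hij (hginj (Fin.ext h)))
    rw [key 0 1 (by decide), key 0 2 (by decide), key 0 3 (by decide),
      key 1 2 (by decide), key 1 3 (by decide)]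
    exact hgrb
  have hFBrb : ∀ (r : Fin 5) (f : {f : Fin 4 ↪ Fin q // IsRainbow K4e (cFin q) f}),
      IsRainbow K4e (cFin n) (FB r f.1) := by
    intro r f
    rw [isRainbow_iff]
    have key : ∀ i j : Fin 4, i ≠ j →
        cFin n s(FB r f.1 i, FB r f.1 j) = cFin q s(f.1 i, f.1 j) := by
      intro i j hij
      rw [cFin_mk, cFin_mk]
      exact colB n q _ _ _ hq5 r.2 (f.1 i).2 (f.1 j).2
        (fun h => hij (f.1.injective (Fin.ext h)))
    rw [key 0 1 (by decide), key 0 2 (by decide), key 0 3 (by decide),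
      key 1 2 (by decide), key 1 3 (by decide)]
    exact (isRainbow_iff _ _).1 f.2
  let Φ : T1 ⊕ T2 → {f : Fin 4 ↪ Fin n // IsRainbow K4e (cFin n) f} := fun t =>
    match t with
    | Sum.inl (g, a) => ⟨FA g a, hFArb g a⟩
    | Sum.inr (r, f) => ⟨FB r f.1, hFBrb r f⟩
  have hΦ : Function.Injective Φ := by
    rintro (⟨g, a⟩ | ⟨r, f⟩) (⟨g', a'⟩ | ⟨r', f'⟩) h <;>
      simp only [Φ, Subtype.mk.injEq] at h
    · have hv : ∀ i : Fin 4, 5 * (a i : ℕ) + (g.1 i : ℕ) = 5 * (a' i : ℕ) + (g'.1 i : ℕ) := by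
        intro i
        have := congrArg (fun (F : Fin 4 ↪ Fin n) => (F i : ℕ)) h
        exact this
      have hg : g = g' := by
        apply Subtype.ext; funext i
        have := (g.1 i).2; have := (g'.1 i).2; have := hv i
        exact Fin.ext (by omega)
      have ha : a = a' := by
        funext i
        have := hv i
        exact Fin.ext (by omega)
      rw [hg, ha]
    · exfalso
      have hv : ∀ i : Fin 4, 5 * (a i : ℕ) + (g.1 i : ℕ) = 5 * (f'.1 i : ℕ) + (r' : ℕ) := by
        intro i
        have := congrArg (fun (F : Fin 4 ↪ Fin n) => (F i : ℕ)) h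
        exact this
      have h01 : (g.1 0 : ℕ) ≠ (g.1 1 : ℕ) := fun hh => by
        have := g.2.1 (Fin.ext hh); simp at this
      have := hv 0; have := hv 1
      have := (g.1 0).2; have := (g.1 1).2; have := r'.2
      omega
    · exfalso
      have hv : ∀ i : Fin 4, 5 * (f.1 i : ℕ) + (r : ℕ) = 5 * (a' i : ℕ) + (g'.1 i : ℕ) := by
        intro i
        have := congrArg (fun (F : Fin 4 ↪ Fin n) => (F i : ℕ)) h
        exact this
      have h01 : (g'.1 0 : ℕ) ≠ (g'.1 1 : ℕ) := fun hh => by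
        have := g'.2.1 (Fin.ext hh); simp at this
      have := hv 0; have := hv 1
      have := (g'.1 0).2; have := (g'.1 1).2; have := r.2
      omega
    · have hv : ∀ i : Fin 4, 5 * (f.1 i : ℕ) + (r : ℕ) = 5 * (f'.1 i : ℕ) + (r' : ℕ) := by
        intro i
        have := congrArg (fun (F : Fin 4 ↪ Fin n) => (F i : ℕ)) h
        exact this
      have hr : r = r' := by
        have := hv 0; have := (f.1 0).2; have := (f'.1 0).2
        have := r.2; have := r'.2
        exact Fin.ext (by omega)
      have hf : f = f' := by
        apply Subtype.ext; apply Function.Embedding.ext; intro i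
        have := hv i
        exact Fin.ext (by omega)
      rw [hr, hf]
  have hcard := Nat.card_le_card_of_injective Φ hΦ
  have hsum : Nat.card (T1 ⊕ T2) = 40 * q^4 + 5 * RB q := by
    rw [Nat.card_sum, Nat.card_prod, Nat.card_prod, card40, Nat.card_fun]
    simp [RB, rainbowCount, Nat.card_eq_fintype_card]
  rw [hsum] at hcard
  exact hcard

lemma RB_lower : ∀ n : ℕ, 2 * n^4 ≤ 31 * RB n + 62 * n^3 := by
  intro n
  induction n using Nat.strong_induction_on with
  | _ n ih =>
  by_cases hn : n ≤ 31
  · calc 2 * n^4 = 2 * n * n^3 := by ring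
    _ ≤ 62 * n^3 := by
        apply Nat.mul_le_mul_right
        omega
    _ ≤ 31 * RB n + 62 * n^3 := by omega
  · push_neg at hn
    set q := n / 5 with hqdef
    have hq6 : 6 ≤ q := by omega
    have hb1 : 5 * q ≤ n := by omega
    have hb2 : n ≤ 5 * q + 4 := by omega
    have hstep := RB_step n (by omega)
    rw [← hqdef] at hstep
    have hih := ih q (by omega)
    have key : 2 * n^4 + 310 * q^3 ≤ 1250 * q^4 + 62 * n^3 := by
      have e1 : n^4 ≤ (5*q+4)^4 := Nat.pow_le_pow_left hb2 4
      have e2 : (5*q)^3 ≤ n^3 := Nat.pow_le_pow_left hb1 3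
      nlinarith [sq_nonneg q, hq6, e1, e2]
    nlinarith [hstep, hih, key]


lemma rbL_ge_RB (n : ℕ) : RB n ≤ rbL K4e n 5 := by
  apply le_csSup
  · refine ⟨Nat.card (Fin 4 ↪ Fin n), ?_⟩
    rintro x ⟨c, rfl⟩
    exact Nat.card_le_card_of_injective _ Subtype.val_injective
  · exact ⟨cFin n, rfl⟩

lemma autCard_K4e : autCard K4e = 4 := by
  have e : (K4e ≃g K4e) ≃
      {e : Fin 4 ≃ Fin 4 // ∀ a b, K4e.Adj (e a) (e b) ↔ K4e.Adj a b} :=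
    { toFun := fun φ => ⟨φ.toEquiv, fun a b => φ.map_rel_iff⟩
      invFun := fun e => ⟨e.1, fun {a b} => e.2 a b⟩
      left_inv := fun φ => rfl
      right_inv := fun e => rfl }
  rw [autCard, Nat.card_congr e, Nat.card_eq_fintype_card]
  decide

lemma rbL_real_lower (n : ℕ) : 2 * (n:ℝ)^4 - 62 * (n:ℝ)^3 ≤ 31 * (rbL K4e n 5 : ℝ) := by
  have h1 := RB_lower n
  have h2 := rbL_ge_RB n
  have : (2 * n^4 : ℕ) ≤ 31 * rbL K4e n 5 + 62 * n^3 := by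
    calc (2 * n^4 : ℕ) ≤ 31 * RB n + 62 * n^3 := h1
    _ ≤ 31 * rbL K4e n 5 + 62 * n^3 := by omega
  have := (Nat.cast_le (α := ℝ)).2 this
  push_cast at this
  linarith

theorem stmt9 :
    (∃ C : ℝ, ∃ N : ℕ, ∀ n ≥ N,
      (rbL K4e n 5 : ℝ) / autCard K4e ≥ (n : ℝ) ^ 4 / 62 - C * (n : ℝ) ^ 3) ∧
    ((1 : ℝ) / 62 > 6 / 625) ∧
    ((6 : ℝ) / 625 = (Nat.choose 5 5 * Nat.factorial 5 : ℝ) / (4 * 5 ^ 5)) ∧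
    ¬ Tendsto (fun n => rbC K4e n 5) atTop
        (𝓝 ((Nat.choose 5 5 * Nat.factorial 5 : ℝ) / 5 ^ 5)) := by
  refine ⟨⟨2, 0, fun n _ => ?_⟩, by norm_num, by norm_num [Nat.factorial], ?_⟩
  · rw [autCard_K4e]
    have := rbL_real_lower n
    have h3 : (0:ℝ) ≤ (n:ℝ)^3 := by positivity
    rw [ge_iff_le, le_div_iff₀ (by norm_num : (0:ℝ) < ((4:ℕ):ℝ))]
    push_cast
    linarith
  · intro hT
    have hL : ((Nat.choose 5 5 * Nat.factorial 5 : ℝ) / 5 ^ 5) < 3/62 := by norm_num [Nat.factorial]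
    have h1 := hT (Iio_mem_nhds hL)
    rw [mem_map, mem_atTop_sets] at h1
    obtain ⟨N, hN⟩ := h1
    have h2 : ∀ n : ℕ, 124 ≤ n → 3/62 ≤ rbC K4e n 5 := by
      intro n hn
      have hD : ((n.choose 4 : ℝ) * (Nat.factorial 4 : ℝ)) ≤ (n:ℝ)^4 := by
        have : n.choose 4 * Nat.factorial 4 ≤ n^4 := by
          rw [Nat.mul_comm, ← Nat.descFactorial_eq_factorial_mul_choose]
          exact Nat.descFactorial_le_pow n 4
        exact_mod_cast this
      have hD0 : (0:ℝ) < (n.choose 4 : ℝ) * (Nat.factorial 4 : ℝ) := by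
        have : 0 < n.choose 4 := Nat.choose_pos (by omega)
        positivity
      have hrb : (3/62 : ℝ) * (n:ℝ)^4 ≤ (rbL K4e n 5 : ℝ) := by
        have := rbL_real_lower n
        have hn' : (124:ℝ) ≤ (n:ℝ) := by exact_mod_cast hn
        have h3 : (0:ℝ) ≤ (n:ℝ)^3 := by positivity
        nlinarith
      rw [rbC, le_div_iff₀ hD0]
      calc (3/62 : ℝ) * ((n.choose 4 : ℝ) * (Nat.factorial 4 : ℝ))
          ≤ (3/62 : ℝ) * (n:ℝ)^4 := by exact mul_le_mul_of_nonneg_left hD (by norm_num)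
        _ ≤ (rbL K4e n 5 : ℝ) := hrb
    have hmem : max N 124 ∈ {n | rbC K4e n 5 ∈ Set.Iio (3/62 : ℝ)} :=
      hN _ (le_max_left _ _)
    have := h2 (max N 124) (le_max_right _ _)
    simp only [Set.mem_setOf_eq, Set.mem_Iio] at hmem
    linarith
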